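/- arXiv:0711.3865 — 2 statements merged into one kernel-verified Lean document; each statement's English description precedes it below -/
import Mathlib

section
/- Let U be a field with a ring automorphism σ and K a subfield of U with σ(K) = K. Let a be a finite tuple of elements of U each of which is algebraic over K. Then ld(a/K) = ild(a/K). -/
/-- The subfield `K(a, σ(a), …, σᵏ(a))` of `U` generated by `K` and the first `k + 1`
transforms of the tuple `a` under `σ`. -/
def segField {U : Type*} [Field U] (K : Subfield U) (σ : U ≃+* U) {n : ℕ}
    (a : Fin n → U) (k : ℕ) : Subfield U :=
  Subfield.closure ((K : Set U) ∪ {x | ∃ j ≤ k, ∃ i, x = (⇑σ)^[j] (a i)})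

/-- The degree `[F : E]` of an extension of subfields of a field (equal to `0` if
`E ≰ F` or if the extension is infinite). -/
noncomputable def fieldDeg {Ω : Type*} [Field Ω] (E F : Subfield Ω) : ℕ :=
  letI := Classical.dec (E ≤ F)
  if h : E ≤ F then
    letI := (Subfield.inclusion h).toAlgebra
    Module.finrank ↥E ↥F
  else 0

/-- The sequence of degrees `dₖ = [K(a,…,σ^{k+1}(a)) : K(a,…,σᵏ(a))]`, whose eventual
value is the limit degree `ld(a/K)`.  Applied to `σ⁻¹` it gives the sequence whose
eventual value is the inverse limit degree `ild(a/K)`. -/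
noncomputable def ldSeq {U : Type*} [Field U] (K : Subfield U) (σ : U ≃+* U) {n : ℕ}
    (a : Fin n → U) : ℕ → ℕ :=
  fun k => fieldDeg (segField K σ a k) (segField K σ a (k + 1))

/-- `l` is the eventual value of the sequence `d`. -/
def IsEventualValue (d : ℕ → ℕ) (l : ℕ) : Prop :=
  ∃ N, ∀ k ≥ N, d k = l

set_option maxHeartbeats 1000000
set_option synthInstance.maxHeartbeats 400000

section FieldDeg

variable {U : Type*} [Field U]

theorem fieldDeg_eq_finrank {E F : Subfield U} (h : E ≤ F) :
    fieldDeg E F =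
      @Module.finrank ↥E ↥F _ _ ((Subfield.inclusion h).toAlgebra).toModule := by
  rw [fieldDeg, dif_pos h]

theorem fieldDeg_of_not_le {E F : Subfield U} (h : ¬ E ≤ F) : fieldDeg E F = 0 := by
  rw [fieldDeg, dif_neg h]

theorem fieldDeg_self (E : Subfield U) : fieldDeg E E = 1 := by
  rw [fieldDeg_eq_finrank le_rfl]
  have : (Subfield.inclusion (le_refl E)).toAlgebra = Algebra.id ↥E := by
    apply Algebra.algebra_ext
    intro r
    rfl
  rw [this]
  exact Module.finrank_self ↥E

theorem fieldDeg_mul {E F G : Subfield U} (h1 : E ≤ F) (h2 : F ≤ G) :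
    fieldDeg E G = fieldDeg E F * fieldDeg F G := by
  letI A1 := (Subfield.inclusion h1).toAlgebra
  letI A2 := (Subfield.inclusion h2).toAlgebra
  letI A3 := (Subfield.inclusion (h1.trans h2)).toAlgebra
  haveI : IsScalarTower ↥E ↥F ↥G := IsScalarTower.of_algebraMap_eq fun x => rfl
  rw [fieldDeg_eq_finrank h1, fieldDeg_eq_finrank h2, fieldDeg_eq_finrank (h1.trans h2)]
  exact (Module.finrank_mul_finrank ↥E ↥F ↥G).symm

/-- The ring equivalence between a subfield and its image under a ring automorphism. -/
def subfieldMapEquiv (e : U ≃+* U) (E : Subfield U) : ↥E ≃+* ↥(E.map (e : U →+* U)) where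
  toFun x := ⟨e ↑x, ⟨↑x, x.2, rfl⟩⟩
  invFun y := ⟨e.symm ↑y, by
    obtain ⟨x, hx, hxy⟩ := y.2
    rw [← hxy]
    simpa using hx⟩
  left_inv x := Subtype.ext (e.symm_apply_apply ↑x)
  right_inv y := Subtype.ext (e.apply_symm_apply ↑y)
  map_mul' x y := Subtype.ext (map_mul e ↑x ↑y)
  map_add' x y := Subtype.ext (map_add e ↑x ↑y)

theorem Subfield.map_le_map_iff {e : U ≃+* U} {E F : Subfield U} :
    E.map (e : U →+* U) ≤ F.map (e : U →+* U) ↔ E ≤ F := by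
  constructor
  · intro h x hx
    obtain ⟨y, hy, hxy⟩ := h ⟨x, hx, rfl⟩
    rwa [← e.injective hxy]
  · intro h x hx
    obtain ⟨y, hy, rfl⟩ := hx
    exact ⟨y, h hy, rfl⟩

theorem fieldDeg_map (e : U ≃+* U) (E F : Subfield U) :
    fieldDeg (E.map (e : U →+* U)) (F.map (e : U →+* U)) = fieldDeg E F := by
  by_cases h : E ≤ F
  · have h' : E.map (e : U →+* U) ≤ F.map (e : U →+* U) := Subfield.map_le_map_iff.2 h
    rw [fieldDeg_eq_finrank h, fieldDeg_eq_finrank h']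
    letI := (Subfield.inclusion h).toAlgebra
    letI := (Subfield.inclusion h').toAlgebra
    show Module.finrank ↥(E.map (e : U →+* U)) ↥(F.map (e : U →+* U)) = Module.finrank ↥E ↥F
    unfold Module.finrank
    rw [Algebra.rank_eq_of_equiv_equiv (subfieldMapEquiv e E) (subfieldMapEquiv e F)
      (by ext x; rfl)]
  · rw [fieldDeg_of_not_le h, fieldDeg_of_not_le (fun h' => h (Subfield.map_le_map_iff.1 h'))]

theorem fieldDeg_toSubfield (E : Subfield U) (L : IntermediateField ↥E U) :
    fieldDeg E L.toSubfield = Module.finrank ↥E ↥L := by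
  have h : E ≤ L.toSubfield := fun x hx => by
    exact L.algebraMap_mem ⟨x, hx⟩
  rw [fieldDeg_eq_finrank h]
  rfl

theorem sup_closure_eq_adjoin_toSubfield (E : Subfield U) (S : Set U) :
    E ⊔ Subfield.closure S = (IntermediateField.adjoin ↥E S).toSubfield := by
  show _ = Subfield.closure (Set.range (algebraMap ↥E U) ∪ S)
  have : Set.range (algebraMap ↥E U) = (E : Set U) := Subtype.range_coe
  rw [this, Subfield.closure_union, Subfield.closure_eq]

theorem fieldDeg_sup_closure_ne_zero (E : Subfield U) {S : Set U} (hfin : S.Finite)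
    (hint : ∀ x ∈ S, IsIntegral ↥E x) :
    fieldDeg E (E ⊔ Subfield.closure S) ≠ 0 := by
  rw [sup_closure_eq_adjoin_toSubfield, fieldDeg_toSubfield]
  haveI : Finite ↑S := hfin.to_subtype
  haveI := IntermediateField.finiteDimensional_adjoin (K := ↥E) (S := S) hint
  exact Module.finrank_pos.ne'

theorem isIntegral_of_le {D E : Subfield U} (hDE : D ≤ E) {x : U}
    (hx : IsIntegral ↥D x) : IsIntegral ↥E x := by
  letI := (Subfield.inclusion hDE).toAlgebra
  haveI : IsScalarTower ↥D ↥E U := IsScalarTower.of_algebraMap_eq fun y => rfl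
  exact IsIntegral.tower_top hx

theorem fieldDeg_sup_single_le {D E : Subfield U} (hDE : D ≤ E) {x : U}
    (hx : IsIntegral ↥D x) :
    fieldDeg E (E ⊔ Subfield.closure {x}) ≤ fieldDeg D (D ⊔ Subfield.closure {x}) := by
  have hxE : IsIntegral ↥E x := isIntegral_of_le hDE hx
  rw [sup_closure_eq_adjoin_toSubfield, sup_closure_eq_adjoin_toSubfield,
    fieldDeg_toSubfield, fieldDeg_toSubfield]
  rw [IntermediateField.adjoin.finrank hx, IntermediateField.adjoin.finrank hxE]
  letI := (Subfield.inclusion hDE).toAlgebra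
  haveI : IsScalarTower ↥D ↥E U := IsScalarTower.of_algebraMap_eq fun y => rfl
  have hdvd := minpoly.dvd_map_of_isScalarTower ↥D ↥E x
  have hne : (minpoly ↥D x).map (algebraMap ↥D ↥E) ≠ 0 :=
    Polynomial.map_ne_zero (minpoly.ne_zero hx)
  calc (minpoly ↥E x).natDegree
      ≤ ((minpoly ↥D x).map (algebraMap ↥D ↥E)).natDegree :=
        Polynomial.natDegree_le_of_dvd hdvd hne
    _ = (minpoly ↥D x).natDegree := Polynomial.natDegree_map _

theorem fieldDeg_sup_closure_le {S : Set U} (hfin : S.Finite) :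
    ∀ D E : Subfield U, D ≤ E → (∀ x ∈ S, IsIntegral ↥D x) →
      fieldDeg E (E ⊔ Subfield.closure S) ≤ fieldDeg D (D ⊔ Subfield.closure S) := by
  refine Set.Finite.induction_on (motive := fun S _ => ∀ D E : Subfield U, D ≤ E →
      (∀ x ∈ S, IsIntegral ↥D x) →
      fieldDeg E (E ⊔ Subfield.closure S) ≤ fieldDeg D (D ⊔ Subfield.closure S))
      S hfin ?_ ?_
  · intro D E hDE _
    simp only [Subfield.closure_empty, sup_bot_eq, fieldDeg_self, le_refl]
  · intro x S hxS hSfin ih D E hDE hint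
    have hx : IsIntegral ↥D x := hint x (Set.mem_insert x S)
    have hcl : ∀ T : Subfield U,
        T ⊔ Subfield.closure (insert x S)
          = (T ⊔ Subfield.closure {x}) ⊔ Subfield.closure S := by
      intro T
      rw [Set.insert_eq, Subfield.closure_union, sup_assoc]
    rw [hcl D, hcl E]
    set D' := D ⊔ Subfield.closure {x} with hD'
    set E' := E ⊔ Subfield.closure {x} with hE'
    have hDD' : D ≤ D' := le_sup_left
    have hEE' : E ≤ E' := le_sup_left
    have hD'E' : D' ≤ E' := sup_le_sup_right hDE _
    have hintD' : ∀ y ∈ S, IsIntegral ↥D' y := fun y hy =>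
      isIntegral_of_le hDD' (hint y (Set.mem_insert_of_mem x hy))
    rw [fieldDeg_mul hDD' le_sup_left, fieldDeg_mul hEE' le_sup_left]
    exact Nat.mul_le_mul (fieldDeg_sup_single_le hDE hx) (ih D' E' hD'E' hintD')

end FieldDeg

section Seg

variable {U : Type*} [Field U]

theorem Subfield.map_closure' (f : U →+* U) (s : Set U) :
    (Subfield.closure s).map f = Subfield.closure (f '' s) := by
  apply le_antisymm
  · rw [Subfield.map_le_iff_le_comap, Subfield.closure_le]
    intro x hx
    exact Subfield.subset_closure ⟨x, hx, rfl⟩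
  · rw [Subfield.closure_le]
    rintro y ⟨x, hx, rfl⟩
    exact ⟨x, Subfield.subset_closure hx, rfl⟩

theorem Subfield.map_id' (S : Subfield U) : S.map (RingHom.id U) = S := by
  ext x
  simp [Subfield.mem_map]

/-- The set of transforms `σ^j(aᵢ)`, `j ≤ k`. -/
def segSet {U : Type*} [Field U] (τ : U ≃+* U) {n : ℕ} (a : Fin n → U) (k : ℕ) : Set U :=
  {x | ∃ j ≤ k, ∃ i, x = (⇑τ)^[j] (a i)}

/-- The set of transforms `σ^j(aᵢ)` for a single `j`. -/
def topSet {U : Type*} [Field U] (τ : U ≃+* U) {n : ℕ} (a : Fin n → U) (j : ℕ) : Set U :=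
  Set.range fun i => (⇑τ)^[j] (a i)

variable (τ : U ≃+* U) (K : Subfield U) {n : ℕ} (a : Fin n → U)

theorem segField_eq (k : ℕ) :
    segField K τ a k = K ⊔ Subfield.closure (segSet τ a k) := by
  rw [segField, Subfield.closure_union, Subfield.closure_eq]
  rfl

theorem segSet_succ (k : ℕ) :
    segSet τ a (k + 1) = segSet τ a k ∪ topSet τ a (k + 1) := by
  ext x
  constructor
  · rintro ⟨j, hj, i, rfl⟩
    rcases Nat.lt_or_ge j (k + 1) with h | h
    · exact Or.inl ⟨j, by omega, i, rfl⟩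
    · have : j = k + 1 := by omega
      subst this
      exact Or.inr ⟨i, rfl⟩
  · rintro (⟨j, hj, i, rfl⟩ | ⟨i, rfl⟩)
    · exact ⟨j, by omega, i, rfl⟩
    · exact ⟨k + 1, le_rfl, i, rfl⟩

theorem segSet_finite (k : ℕ) : (segSet τ a k).Finite := by
  have hsub : segSet τ a k ⊆
      (fun p : ℕ × Fin n => (⇑τ)^[p.1] (a p.2)) '' (Set.Iic k ×ˢ Set.univ) := by
    rintro x ⟨j, hj, i, rfl⟩
    exact ⟨(j, i), ⟨hj, trivial⟩, rfl⟩
  exact (((Set.finite_Iic k).prod Set.finite_univ).image _).subset hsub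

theorem topSet_finite (j : ℕ) : (topSet τ a j).Finite := Set.finite_range _

theorem image_topSet (j : ℕ) : ⇑τ '' topSet τ a j = topSet τ a (j + 1) := by
  rw [topSet, topSet, ← Set.range_comp]
  exact congrArg Set.range (funext fun i => (Function.iterate_succ_apply' (⇑τ) j (a i)).symm)

theorem image_segSet_subset (k : ℕ) : ⇑τ '' segSet τ a k ⊆ segSet τ a (k + 1) := by
  rintro x ⟨y, ⟨j, hj, i, rfl⟩, rfl⟩
  exact ⟨j + 1, by omega, i, (Function.iterate_succ_apply' (⇑τ) j (a i)).symm⟩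

theorem map_segField' (e : U ≃+* U) (hKe : K.map (e : U →+* U) = K) (k : ℕ) :
    (segField K τ a k).map (e : U →+* U)
      = K ⊔ Subfield.closure (⇑e '' segSet τ a k) := by
  have h1 : segField K τ a k = Subfield.closure ((K : Set U) ∪ segSet τ a k) := rfl
  rw [h1, Subfield.map_closure', Set.image_union]
  show Subfield.closure (⇑e '' (K : Set U) ∪ ⇑e '' segSet τ a k) = _
  have h2 : ⇑e '' (K : Set U) = (K : Set U) := by
    have := congrArg (fun S : Subfield U => (S : Set U)) hKe
    simpa [Subfield.coe_map] using this
  rw [h2, Subfield.closure_union, Subfield.closure_eq]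

theorem K_le_segField (k : ℕ) : K ≤ segField K τ a k := by
  rw [segField_eq]
  exact le_sup_left

theorem segField_le_succ (k : ℕ) : segField K τ a k ≤ segField K τ a (k + 1) := by
  rw [segField_eq, segField_eq]
  exact sup_le_sup_left (Subfield.closure_mono (by
    rw [segSet_succ]; exact Set.subset_union_left)) K

theorem segField_zero_le (m : ℕ) : segField K τ a 0 ≤ segField K τ a m := by
  induction m with
  | zero => exact le_rfl
  | succ m ih => exact ih.trans (segField_le_succ τ K a m)

variable (hK : K.map (τ : U →+* U) = K)

theorem map_pow_coe (m : ℕ) : ((τ ^ (m + 1) : U ≃+* U) : U →+* U)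
    = ((τ : U →+* U)).comp ((τ ^ m : U ≃+* U) : U →+* U) := by
  ext x
  have : (τ ^ (m + 1)) x = τ ((τ ^ m) x) := by
    rw [pow_succ']
    rfl
  simpa using this

include hK

theorem map_K_pow (m : ℕ) : K.map ((τ ^ m : U ≃+* U) : U →+* U) = K := by
  induction m with
  | zero =>
    have : ((τ ^ 0 : U ≃+* U) : U →+* U) = RingHom.id U := by ext x; rfl
    rw [this, Subfield.map_id']
  | succ m ih =>
    rw [map_pow_coe, ← Subfield.map_map, ih, hK]

theorem map_K_symm : K.map (τ.symm : U →+* U) = K := by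
  conv_lhs => rw [← hK]
  rw [Subfield.map_map]
  have : ((τ.symm : U →+* U)).comp (τ : U →+* U) = RingHom.id U := by
    ext x
    exact τ.symm_apply_apply x
  rw [this, Subfield.map_id']


end Seg

section Main

variable {U : Type*} [Field U] (τ : U ≃+* U) (K : Subfield U) {n : ℕ} (a : Fin n → U)

theorem isIntegral_iterate (hK : K.map (τ : U →+* U) = K)
    (halg : ∀ i, IsAlgebraic ↥K (a i)) (j : ℕ) (i : Fin n) :
    IsIntegral ↥K ((⇑τ)^[j] (a i)) := by
  induction j with
  | zero => exact (halg i).isIntegral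
  | succ j ih =>
    rw [Function.iterate_succ_apply']
    have hcomp : (algebraMap ↥K U).comp
        (((subfieldMapEquiv τ K).trans (RingEquiv.subfieldCongr hK)) : ↥K →+* ↥K)
        = (τ : U →+* U).comp (algebraMap ↥K U) := by
      ext x
      rfl
    exact IsIntegral.map_of_comp_eq _ _ hcomp ih

theorem ringEquiv_coe_pow (e : U ≃+* U) (m : ℕ) : ⇑(e ^ m) = (⇑e)^[m] := by
  induction m with
  | zero => rfl
  | succ m ih =>
    funext x
    have h1 : (e ^ (m + 1)) x = e ((e ^ m) x) := by rw [pow_succ']; rfl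
    rw [h1, ih, Function.iterate_succ_apply']

theorem image_segSet_symm_pow (m : ℕ) :
    ⇑(τ.symm ^ m) '' segSet τ a m = segSet τ.symm a m := by
  have hpow : ⇑(τ.symm ^ m) = (⇑τ.symm)^[m] := ringEquiv_coe_pow τ.symm m
  have key : ∀ j ≤ m, ∀ x : U, (⇑τ.symm)^[m] ((⇑τ)^[j] x) = (⇑τ.symm)^[m - j] x := by
    intro j hj x
    have h1 : (⇑τ.symm)^[j] ((⇑τ)^[j] x) = x :=
      (Function.LeftInverse.iterate (fun y => τ.symm_apply_apply y) j) x
    calc (⇑τ.symm)^[m] ((⇑τ)^[j] x)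
        = (⇑τ.symm)^[m - j] ((⇑τ.symm)^[j] ((⇑τ)^[j] x)) := by
          rw [← Function.iterate_add_apply]
          congr 1
          omega
      _ = (⇑τ.symm)^[m - j] x := by rw [h1]
  ext x
  simp only [Set.mem_image, hpow]
  constructor
  · rintro ⟨y, ⟨j, hj, i, rfl⟩, rfl⟩
    exact ⟨m - j, by omega, i, key j hj (a i)⟩
  · rintro ⟨j, hj, i, rfl⟩
    refine ⟨(⇑τ)^[m - j] (a i), ⟨m - j, by omega, i, rfl⟩, ?_⟩
    rw [key (m - j) (by omega) (a i)]
    congr 1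
    omega

theorem map_segField_symm_pow (hK : K.map (τ : U →+* U) = K) (m : ℕ) :
    (segField K τ a m).map ((τ.symm ^ m : U ≃+* U) : U →+* U)
      = segField K τ.symm a m := by
  have hKs : K.map (τ.symm : U →+* U) = K := map_K_symm τ K hK
  rw [map_segField' τ K a (τ.symm ^ m) (map_K_pow τ.symm K hKs m),
    image_segSet_symm_pow, ← segField_eq]

theorem map_segField_le (hK : K.map (τ : U →+* U) = K) (k : ℕ) :
    (segField K τ a k).map (τ : U →+* U) ≤ segField K τ a (k + 1) := by
  rw [map_segField' τ K a τ hK]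
  refine sup_le (K_le_segField τ K a (k + 1)) ?_
  rw [segField_eq]
  exact le_trans (Subfield.closure_mono (image_segSet_subset τ a k)) le_sup_right

theorem segField_succ_sup (k : ℕ) :
    segField K τ a (k + 1)
      = segField K τ a k ⊔ Subfield.closure (topSet τ a (k + 1)) := by
  rw [segField_eq, segField_eq, segSet_succ, Subfield.closure_union, sup_assoc]

theorem map_segField_succ_sup (hK : K.map (τ : U →+* U) = K) (k : ℕ) :
    (segField K τ a (k + 1)).map (τ : U →+* U)
      = (segField K τ a k).map (τ : U →+* U)
          ⊔ Subfield.closure (topSet τ a (k + 2)) := by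
  rw [map_segField' τ K a τ hK, map_segField' τ K a τ hK, segSet_succ, Set.image_union,
    image_topSet, Subfield.closure_union, sup_assoc]

theorem fieldDeg_K_segField_ne_zero (hK : K.map (τ : U →+* U) = K)
    (halg : ∀ i, IsAlgebraic ↥K (a i)) (m : ℕ) :
    fieldDeg K (segField K τ a m) ≠ 0 := by
  rw [segField_eq]
  refine fieldDeg_sup_closure_ne_zero K (segSet_finite τ a m) ?_
  rintro x ⟨j, hj, i, rfl⟩
  exact isIntegral_iterate τ K a hK halg j i

theorem ldSeq_succ_le (hK : K.map (τ : U →+* U) = K)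
    (halg : ∀ i, IsAlgebraic ↥K (a i)) (k : ℕ) :
    ldSeq K τ a (k + 1) ≤ ldSeq K τ a k := by
  have hKD : K ≤ (segField K τ a k).map (τ : U →+* U) := by
    rw [map_segField' τ K a τ hK]
    exact le_sup_left
  have hint : ∀ x ∈ topSet τ a (k + 2),
      IsIntegral ↥((segField K τ a k).map (τ : U →+* U)) x := by
    rintro x ⟨i, rfl⟩
    exact isIntegral_of_le hKD (isIntegral_iterate τ K a hK halg (k + 2) i)
  show fieldDeg (segField K τ a (k + 1)) (segField K τ a (k + 2))
      ≤ fieldDeg (segField K τ a k) (segField K τ a (k + 1))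
  calc fieldDeg (segField K τ a (k + 1)) (segField K τ a (k + 2))
      = fieldDeg (segField K τ a (k + 1))
          (segField K τ a (k + 1) ⊔ Subfield.closure (topSet τ a (k + 2))) := by
        rw [← segField_succ_sup]
    _ ≤ fieldDeg ((segField K τ a k).map (τ : U →+* U))
          ((segField K τ a k).map (τ : U →+* U)
            ⊔ Subfield.closure (topSet τ a (k + 2))) :=
        fieldDeg_sup_closure_le (topSet_finite τ a (k + 2)) _ _
          (map_segField_le τ K a hK k) hint
    _ = fieldDeg ((segField K τ a k).map (τ : U →+* U))
          ((segField K τ a (k + 1)).map (τ : U →+* U)) := by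
        rw [map_segField_succ_sup τ K a hK k]
    _ = fieldDeg (segField K τ a k) (segField K τ a (k + 1)) :=
        fieldDeg_map τ _ _

theorem segField_map_pow_le (hK : K.map (τ : U →+* U) = K) (m : ℕ) :
    (segField K τ a 0).map ((τ ^ m : U ≃+* U) : U →+* U) ≤ segField K τ a m := by
  induction m with
  | zero =>
    have h0 : ((τ ^ 0 : U ≃+* U) : U →+* U) = RingHom.id U := by ext x; rfl
    rw [h0, Subfield.map_id']
  | succ m ih =>
    rw [map_pow_coe, ← Subfield.map_map]
    exact le_trans (Subfield.map_le_map_iff.2 ih) (map_segField_le τ K a hK m)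

theorem ldSeq_symm_eq (hK : K.map (τ : U →+* U) = K)
    (halg : ∀ i, IsAlgebraic ↥K (a i)) (m : ℕ) :
    ldSeq K τ.symm a m = ldSeq K τ a m := by
  have hKs : K.map (τ.symm : U →+* U) = K := map_K_symm τ K hK
  have hGmap : ∀ t, (segField K τ.symm a t).map ((τ ^ t : U ≃+* U) : U →+* U)
      = segField K τ a t := by
    intro t
    have h := map_segField_symm_pow τ.symm K a hKs t
    rwa [RingEquiv.symm_symm] at h
  have hq : ldSeq K τ.symm a m
      = fieldDeg ((segField K τ a m).map (τ : U →+* U)) (segField K τ a (m + 1)) := by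
    show fieldDeg (segField K τ.symm a m) (segField K τ.symm a (m + 1)) = _
    rw [← fieldDeg_map (τ ^ (m + 1)) (segField K τ.symm a m) (segField K τ.symm a (m + 1)),
      hGmap (m + 1)]
    congr 1
    rw [map_pow_coe, ← Subfield.map_map, hGmap m]
  have hKT : ∀ t, K ≤ (segField K τ a 0).map ((τ ^ t : U ≃+* U) : U →+* U) := by
    intro t
    have h := Subfield.map_le_map_iff (e := τ ^ t).2 (K_le_segField τ K a 0)
    rwa [map_K_pow τ K hK t] at h
  have hc : ∀ t, fieldDeg K ((segField K τ a 0).map ((τ ^ t : U ≃+* U) : U →+* U))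
      = fieldDeg K (segField K τ a 0) := by
    intro t
    have h := fieldDeg_map (τ ^ t) K (segField K τ a 0)
    rwa [map_K_pow τ K hK t] at h
  have hcpos : 0 < fieldDeg K (segField K τ a 0) :=
    Nat.pos_of_ne_zero (fieldDeg_K_segField_ne_zero τ K a hK halg 0)
  have hR : ∀ t, fieldDeg (segField K τ a 0) (segField K τ a t)
      = fieldDeg ((segField K τ a 0).map ((τ ^ t : U ≃+* U) : U →+* U))
          (segField K τ a t) := by
    intro t
    have h1 : fieldDeg K (segField K τ a t)
        = fieldDeg K (segField K τ a 0)
            * fieldDeg (segField K τ a 0) (segField K τ a t) :=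
      fieldDeg_mul (K_le_segField τ K a 0) (segField_zero_le τ K a t)
    have h2 : fieldDeg K (segField K τ a t)
        = fieldDeg K (segField K τ a 0)
            * fieldDeg ((segField K τ a 0).map ((τ ^ t : U ≃+* U) : U →+* U))
                (segField K τ a t) := by
      rw [← hc t]
      exact fieldDeg_mul (hKT t) (segField_map_pow_le τ K a hK t)
    exact Nat.eq_of_mul_eq_mul_left hcpos (h1 ▸ h2)
  have hmapsucc' : (segField K τ a 0).map ((τ ^ (m + 1) : U ≃+* U) : U →+* U)
      ≤ (segField K τ a m).map (τ : U →+* U) := by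
    rw [map_pow_coe, ← Subfield.map_map]
    exact Subfield.map_le_map_iff.2 (segField_map_pow_le τ K a hK m)
  have e1 : fieldDeg (segField K τ a 0) (segField K τ a (m + 1))
      = fieldDeg (segField K τ a 0) (segField K τ a m) * ldSeq K τ a m :=
    fieldDeg_mul (segField_zero_le τ K a m) (segField_le_succ τ K a m)
  have e2 : fieldDeg ((segField K τ a 0).map ((τ ^ (m + 1) : U ≃+* U) : U →+* U))
        (segField K τ a (m + 1))
      = fieldDeg ((segField K τ a 0).map ((τ ^ m : U ≃+* U) : U →+* U))
          (segField K τ a m)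
        * fieldDeg ((segField K τ a m).map (τ : U →+* U)) (segField K τ a (m + 1)) := by
    rw [fieldDeg_mul hmapsucc' (map_segField_le τ K a hK m)]
    congr 1
    rw [map_pow_coe, ← Subfield.map_map]
    exact fieldDeg_map τ _ _
  have hne : 0 < fieldDeg (segField K τ a 0) (segField K τ a m) := by
    rcases Nat.eq_zero_or_pos (fieldDeg (segField K τ a 0) (segField K τ a m)) with h0 | h
    · exfalso
      have h1 : fieldDeg K (segField K τ a m)
          = fieldDeg K (segField K τ a 0)
              * fieldDeg (segField K τ a 0) (segField K τ a m) :=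
        fieldDeg_mul (K_le_segField τ K a 0) (segField_zero_le τ K a m)
      rw [h0, mul_zero] at h1
      exact fieldDeg_K_segField_ne_zero τ K a hK halg m h1
    · exact h
  rw [hq]
  refine (Nat.eq_of_mul_eq_mul_left hne ?_).symm
  calc fieldDeg (segField K τ a 0) (segField K τ a m) * ldSeq K τ a m
      = fieldDeg (segField K τ a 0) (segField K τ a (m + 1)) := e1.symm
    _ = fieldDeg ((segField K τ a 0).map ((τ ^ (m + 1) : U ≃+* U) : U →+* U))
          (segField K τ a (m + 1)) := hR (m + 1)
    _ = fieldDeg ((segField K τ a 0).map ((τ ^ m : U ≃+* U) : U →+* U))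
          (segField K τ a m)
        * fieldDeg ((segField K τ a m).map (τ : U →+* U)) (segField K τ a (m + 1)) := e2
    _ = fieldDeg (segField K τ a 0) (segField K τ a m)
        * fieldDeg ((segField K τ a m).map (τ : U →+* U)) (segField K τ a (m + 1)) := by
        rw [← hR m]

theorem exists_eventual_of_antitone {d : ℕ → ℕ} (hd : ∀ k, d (k + 1) ≤ d k) :
    ∃ l, IsEventualValue d l := by
  have hne : (Set.range d).Nonempty := ⟨d 0, 0, rfl⟩
  obtain ⟨N, hN⟩ := Nat.sInf_mem hne
  refine ⟨sInf (Set.range d), N, fun k hk => ?_⟩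
  exact le_antisymm (hN ▸ antitone_nat_of_succ_le hd hk) (Nat.sInf_le ⟨k, rfl⟩)

end Main


/-- Let `U` be a field with a ring automorphism `σ` and `K` a subfield with
`σ(K) = K`.  If `a` is a tuple of elements algebraic over `K`, then
`ld(a/K) = ild(a/K)`: the two degree sequences have a common eventual value. -/
theorem limit_degree_eq_inverse_limit_degree_of_algebraic {U : Type*} [Field U]
    (σ : U ≃+* U) (K : Subfield U) (hK : K.map (σ : U →+* U) = K) {n : ℕ}
    (a : Fin n → U) (halg : ∀ i, IsAlgebraic ↥K (a i)) :
    ∃ l : ℕ, IsEventualValue (ldSeq K σ a) l ∧ IsEventualValue (ldSeq K σ.symm a) l := by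
  obtain ⟨l, N, hl⟩ := exists_eventual_of_antitone (ldSeq_succ_le σ K a hK halg)
  exact ⟨l, ⟨N, hl⟩, ⟨N, fun k hk => (ldSeq_symm_eq σ K a hK halg k).trans (hl k hk)⟩⟩
end

section
/- Let Ω be a field of characteristic p > 0 and let a, b, t be elements of Ω that are algebraically independent over the prime field F_p. Let K = F_p(a^p, b^p, t, a+bt) be the subfield of Ω generated by a^p, b^p, t and a+bt. Then for every subfield E' of K, if E'(a,b) and K are linearly disjoint over E', then E' = K. (That is, K itself is the field of definition of the ideal of polynomials over K vanishing at (a,b).) -/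
/-- Subsets `A` and `B` of a field `F`, both containing a common subset `C`, are
linearly disjoint over `C` if every finite family of elements of `A` that is linearly
independent over `C` remains linearly independent over `B`. -/
def LinearlyDisjointOver (F : Type*) [Field F] (C A B : Set F) : Prop :=
  ∀ (n : ℕ) (v : Fin n → F), (∀ i, v i ∈ A) →
    (∀ c : Fin n → F, (∀ i, c i ∈ C) → ∑ i, c i * v i = 0 → ∀ i, c i = 0) →
    ∀ c : Fin n → F, (∀ i, c i ∈ B) → ∑ i, c i * v i = 0 → ∀ i, c i = 0

open MvPolynomial

lemma aux_not_mem (p : ℕ) [Fact p.Prime] {Ω : Type*} [Field Ω] [CharP Ω p]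
    [Algebra (ZMod p) Ω] (a b t : Ω) (hind : AlgebraicIndependent (ZMod p) ![a, b, t]) :
    a ∉ Subfield.closure {a ^ p, b ^ p, t, a + b * t} := by
  intro ha
  let ψ : MvPolynomial (Fin 3) (ZMod p) →+* Ω := (aeval ![a, b, t] : _ →ₐ[ZMod p] Ω).toRingHom
  have hinj : Function.Injective ψ := hind
  have hψ0 : ψ (X 0) = a := by simp [ψ]
  have hψ1 : ψ (X 1) = b := by simp [ψ]
  have hψ2 : ψ (X 2) = t := by simp [ψ]
  have himg : ψ '' ({X 0 ^ p, X 1 ^ p, X 2, X 0 + X 1 * X 2} : Set (MvPolynomial (Fin 3) (ZMod p)))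
      = ({a ^ p, b ^ p, t, a + b * t} : Set Ω) := by
    simp only [Set.image_insert_eq, Set.image_singleton, map_pow, map_add, map_mul,
      hψ0, hψ1, hψ2]
  have ha0 : a ≠ 0 := by
    intro h
    have h2 : ψ (X 0) = ψ 0 := by rw [map_zero, hψ0, h]
    exact MvPolynomial.X_ne_zero 0 (hinj h2)
  rw [Subfield.mem_closure_iff] at ha
  obtain ⟨y, hy, z, hz, hyz⟩ := ha
  have hz0 : z ≠ 0 := by
    rintro rfl
    rw [div_zero] at hyz
    exact ha0 hyz.symm
  have hrw : Subring.closure ({a ^ p, b ^ p, t, a + b * t} : Set Ω)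
      = (Subring.closure {X 0 ^ p, X 1 ^ p, X 2, X 0 + X 1 * X 2}).map ψ := by
    rw [RingHom.map_closure, himg]
  rw [hrw] at hy hz
  obtain ⟨F, hF, hFy⟩ := hy
  obtain ⟨G, hG, hGz⟩ := hz
  rw [div_eq_iff hz0] at hyz
  have hFG : F = X 0 * G := by
    apply hinj
    show ψ F = ψ (X 0 * G)
    rw [map_mul, hψ0, hFy, hGz, hyz]
  let D : Derivation (ZMod p) (MvPolynomial (Fin 3) (ZMod p)) (MvPolynomial (Fin 3) (ZMod p)) :=
    (X 2 : MvPolynomial (Fin 3) (ZMod p)) • pderiv 0 - pderiv 1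
  have hDX0 : D (X 0) = X 2 := by simp [D]
  have hD : ∀ f ∈ Subring.closure
      ({X 0 ^ p, X 1 ^ p, X 2, X 0 + X 1 * X 2} : Set (MvPolynomial (Fin 3) (ZMod p))),
      D f = 0 := by
    intro f hf
    induction hf using Subring.closure_induction with
    | mem x hx =>
      have hchar : ((p : MvPolynomial (Fin 3) (ZMod p))) = 0 :=
        CharP.cast_eq_zero (MvPolynomial (Fin 3) (ZMod p)) p
      rcases hx with h | h | h | h
      · subst h
        rw [Derivation.leibniz_pow, nsmul_eq_mul, hchar, zero_mul]
      · subst h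
        rw [Derivation.leibniz_pow, nsmul_eq_mul, hchar, zero_mul]
      · subst h
        simp [D]
      · rw [Set.mem_singleton_iff] at h
        subst h
        simp [D]
    | zero => exact map_zero D
    | one => exact D.map_one_eq_zero
    | add x y hx hy ihx ihy => rw [map_add, ihx, ihy, add_zero]
    | neg x hx ihx => rw [map_neg, ihx, neg_zero]
    | mul x y hx hy ihx ihy => rw [D.leibniz, ihx, ihy, smul_zero, smul_zero, add_zero]
  have hDF : D F = 0 := hD F hF
  have hDG : D G = 0 := hD G hG
  rw [hFG, D.leibniz, hDG, hDX0, smul_zero, zero_add, smul_eq_mul] at hDF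
  have hG0 : G = 0 := by
    rcases mul_eq_zero.mp hDF with h | h
    · exact h
    · exact absurd h (MvPolynomial.X_ne_zero 2)
  exact hz0 (by rw [← hGz, hG0, map_zero])

/-- Let `Ω` be a field of characteristic `p > 0` and `a, b, t ∈ Ω` algebraically
independent over the prime field `𝔽_p`, and let `K = 𝔽_p(aᵖ, bᵖ, t, a + bt)`.  If
`E'` is a subfield of `K` such that `E'(a,b)` and `K` are linearly disjoint over
`E'`, then `E' = K`; that is, `K` itself is the field of definition of the ideal of
polynomials over `K` vanishing at `(a, b)`. -/
theorem field_of_definition_of_ideal_example (p : ℕ) [Fact p.Prime]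
    {Ω : Type*} [Field Ω] [CharP Ω p] [Algebra (ZMod p) Ω]
    (a b t : Ω) (hind : AlgebraicIndependent (ZMod p) ![a, b, t])
    (E' : Subfield Ω) (hE' : E' ≤ Subfield.closure {a ^ p, b ^ p, t, a + b * t})
    (hdisj : LinearlyDisjointOver Ω (E' : Set Ω)
      ((E' ⊔ Subfield.closure {a, b} : Subfield Ω) : Set Ω)
      ((Subfield.closure {a ^ p, b ^ p, t, a + b * t} : Subfield Ω) : Set Ω)) :
    E' = Subfield.closure {a ^ p, b ^ p, t, a + b * t} := by
  have hanK : a ∉ Subfield.closure {a ^ p, b ^ p, t, a + b * t} :=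
    aux_not_mem p a b t hind
  have haEK : a ∈ (E' ⊔ Subfield.closure {a, b} : Subfield Ω) :=
    SetLike.le_def.mp le_sup_right (Subfield.subset_closure (by simp))
  have hbEK : b ∈ (E' ⊔ Subfield.closure {a, b} : Subfield Ω) :=
    SetLike.le_def.mp le_sup_right (Subfield.subset_closure (by simp))
  have hapK : a ^ p ∈ Subfield.closure {a ^ p, b ^ p, t, a + b * t} :=
    Subfield.subset_closure (by simp)
  have hbpK : b ^ p ∈ Subfield.closure {a ^ p, b ^ p, t, a + b * t} :=
    Subfield.subset_closure (by simp)
  have htK : t ∈ Subfield.closure {a ^ p, b ^ p, t, a + b * t} :=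
    Subfield.subset_closure (by simp)
  have hcK : a + b * t ∈ Subfield.closure {a ^ p, b ^ p, t, a + b * t} :=
    Subfield.subset_closure (by simp)
  -- Step A : any element of K ∩ E'(a,b) lies in E'
  have keyA : ∀ x : Ω, x ∈ Subfield.closure {a ^ p, b ^ p, t, a + b * t} →
      x ∈ (E' ⊔ Subfield.closure {a, b} : Subfield Ω) → x ∈ E' := by
    intro x hxK hxEK
    by_contra hx
    have hindep : ∀ c : Fin 2 → Ω, (∀ i, c i ∈ (E' : Set Ω)) →
        ∑ i, c i * ![x, 1] i = 0 → ∀ i, c i = 0 := by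
      intro c hc hsum
      rw [Fin.sum_univ_two] at hsum
      simp only [Matrix.cons_val_zero, Matrix.cons_val_one, Matrix.head_cons, mul_one] at hsum
      have hc0 : c 0 = 0 := by
        by_contra h0
        refine hx ?_
        have hxeq : x = -(c 1) / c 0 := by
          rw [eq_div_iff h0]
          linear_combination hsum
        rw [hxeq]
        exact div_mem (neg_mem (hc 1)) (hc 0)
      have hc1 : c 1 = 0 := by
        rw [hc0, zero_mul, zero_add] at hsum
        exact hsum
      intro i
      fin_cases i <;> assumption
    have hmem : ∀ i, (![x, (1 : Ω)]) i ∈ ((E' ⊔ Subfield.closure {a, b} : Subfield Ω) : Set Ω) := by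
      intro i
      fin_cases i
      · exact hxEK
      · exact one_mem _
    have hfin := hdisj 2 ![x, 1] hmem hindep ![1, -x]
      (by intro i; fin_cases i
          · exact one_mem _
          · exact neg_mem hxK)
      (by rw [Fin.sum_univ_two]; simp) 0
    simp at hfin
  -- Step B : the K-linear relation a + t·b - (a+bt)·1 = 0 forces an E'-relation
  have hrel : ¬ (∀ c : Fin 3 → Ω, (∀ i, c i ∈ (E' : Set Ω)) →
      ∑ i, c i * ![a, b, 1] i = 0 → ∀ i, c i = 0) := by
    intro hindep
    have hmem : ∀ i, (![a, b, (1 : Ω)]) i ∈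
        ((E' ⊔ Subfield.closure {a, b} : Subfield Ω) : Set Ω) := by
      intro i
      fin_cases i
      · exact haEK
      · exact hbEK
      · exact one_mem _
    have hfin := hdisj 3 ![a, b, 1] hmem hindep ![1, t, -(a + b * t)]
      (by intro i; fin_cases i
          · exact one_mem _
          · exact htK
          · exact neg_mem hcK)
      (by rw [Fin.sum_univ_three]; simp; ring) 0
    simp at hfin
  push_neg at hrel
  obtain ⟨c, hcE, hcsum, i0, hi0⟩ := hrel
  rw [Fin.sum_univ_three] at hcsum
  simp only [Matrix.cons_val_zero, Matrix.cons_val_one, Matrix.head_cons, mul_one,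
    Matrix.cons_val_two, Matrix.tail_cons] at hcsum
  -- hcsum : c 0 * a + c 1 * b + c 2 = 0
  have hc0K : c 0 ∈ Subfield.closure {a ^ p, b ^ p, t, a + b * t} := hE' (hcE 0)
  have hc1K : c 1 ∈ Subfield.closure {a ^ p, b ^ p, t, a + b * t} := hE' (hcE 1)
  have hc2K : c 2 ∈ Subfield.closure {a ^ p, b ^ p, t, a + b * t} := hE' (hcE 2)
  have h2 : (c 1 - c 0 * t) * b + (c 2 + c 0 * (a + b * t)) = 0 := by
    linear_combination hcsum
  by_cases hd : c 1 - c 0 * t = 0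
  · have h3 : c 2 + c 0 * (a + b * t) = 0 := by
      rw [hd, zero_mul, zero_add] at h2
      exact h2
    have hα : c 0 ≠ 0 := by
      intro h0
      have hb1 : c 1 = 0 := by
        have := hd
        rw [h0, zero_mul, sub_zero] at this
        exact this
      have hb2 : c 2 = 0 := by
        rw [h0, zero_mul, add_zero] at h3
        exact h3
      fin_cases i0 <;> simp_all
    have htE : t ∈ E' := by
      have hteq : t = c 1 / c 0 := by
        rw [eq_div_iff hα]
        linear_combination -hd
      rw [hteq]
      exact div_mem (hcE 1) (hcE 0)
    have hcE' : a + b * t ∈ E' := by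
      have hceq : a + b * t = -(c 2) / c 0 := by
        rw [eq_div_iff hα]
        linear_combination h3
      rw [hceq]
      exact div_mem (neg_mem (hcE 2)) (hcE 0)
    refine le_antisymm hE' ((Subfield.closure_le).mpr ?_)
    intro y hy
    simp only [Set.mem_insert_iff, Set.mem_singleton_iff] at hy
    rcases hy with rfl | rfl | rfl | rfl
    · exact keyA _ hapK (pow_mem haEK p)
    · exact keyA _ hbpK (pow_mem hbEK p)
    · exact htE
    · exact hcE'
  · -- b ∈ K, hence a ∈ K, contradiction
    have hbK : b ∈ Subfield.closure {a ^ p, b ^ p, t, a + b * t} := by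
      have hbeq : b = -(c 2 + c 0 * (a + b * t)) / (c 1 - c 0 * t) := by
        rw [eq_div_iff hd]
        linear_combination h2
      have hmem2 : -(c 2 + c 0 * (a + b * t)) / (c 1 - c 0 * t) ∈
          Subfield.closure {a ^ p, b ^ p, t, a + b * t} :=
        div_mem (neg_mem (add_mem hc2K (mul_mem hc0K hcK)))
          (sub_mem hc1K (mul_mem hc0K htK))
      rwa [← hbeq] at hmem2
    have haK : a ∈ Subfield.closure {a ^ p, b ^ p, t, a + b * t} := by
      have haeq : a = (a + b * t) - t * b := by ring
      have hmem3 : (a + b * t) - t * b ∈ Subfield.closure {a ^ p, b ^ p, t, a + b * t} :=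
        sub_mem hcK (mul_mem htK hbK)
      rwa [← haeq] at hmem3
    exact absurd haK hanK
end
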